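/- Let F : [0,1] × ℝ → ℝ be continuous, λ > 0, and 0 < α ≤ λ, and suppose that for all t ∈ [0,1] and all x, y ∈ ℝ with y < x one has 0 ≤ F(t, y) + λy − (F(t, x) + λx) ≤ α·(x − y)·(x − y)·ln(1 + 1/(x − y)). Define (Tu)(t) = ∫₀¹ G(t, s)·[F(s, u(s)) + λu(s)] ds for u ∈ C[0,1], where G(t, s) = e^{λ(1+s−t)}/(e^λ − 1) for 0 ≤ s < t ≤ 1 and G(t, s) = e^{λ(s−t)}/(e^λ − 1) for 0 ≤ t ≤ s ≤ 1. Then for all u, v ∈ C[0,1] with v ≤ u pointwise and u ≠ v, ‖Tu − Tv‖ ≤ (α/λ)·f(‖u − v‖)·‖u − v‖ ≤ f(‖u − v‖)·‖u − v‖, where f(t) = t·ln(1 + 1/t) and ‖·‖ is the supremum norm. -/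

import Mathlib

open MeasureTheory Set

/-- The Green function of the first-order periodic problem. -/
noncomputable def greenG (lam t s : ℝ) : ℝ :=
  if s < t then Real.exp (lam * (1 + s - t)) / (Real.exp lam - 1)
  else Real.exp (lam * (s - t)) / (Real.exp lam - 1)

/-- The integral operator associated with the periodic problem. -/
noncomputable def periodicT (lam : ℝ) (F : ℝ → ℝ → ℝ) (u : ℝ → ℝ) (t : ℝ) : ℝ :=
  ∫ s in (0:ℝ)..1, greenG lam t s * (F s (u s) + lam * u s)

/-- The function `f(t) = t·ln(1 + 1/t)`. -/
noncomputable def fGer (t : ℝ) : ℝ := t * Real.log (1 + 1 / t)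

lemma fGer_nonneg {x : ℝ} (hx : 0 ≤ x) : 0 ≤ fGer x := by
  unfold fGer
  have : (0:ℝ) ≤ Real.log (1 + 1/x) := Real.log_nonneg (by linarith [one_div_nonneg.mpr hx])
  positivity

lemma sq_fGer_mono {x M : ℝ} (hx : 0 ≤ x) (hxM : x ≤ M) : x * fGer x ≤ M * fGer M := by
  rcases eq_or_lt_of_le hx with h0 | h0
  · simp only [← h0]
    have hM : 0 ≤ M := le_trans hx hxM
    simp only [fGer, zero_mul, one_div]
    have : (0:ℝ) ≤ Real.log (1 + M⁻¹) := Real.log_nonneg (by linarith [inv_nonneg.mpr hM])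
    positivity
  · -- 0 < x
    have hM : 0 < M := lt_of_lt_of_le h0 hxM
    set h : ℝ → ℝ := fun y => y^2 * (Real.log (y+1) - Real.log y) with hh
    have key : ∀ y : ℝ, 0 < y → y * fGer y = h y := by
      intro y hy
      simp only [hh, fGer]
      have : 1 + 1/y = (y+1)/y := by field_simp
      rw [this, Real.log_div (by positivity) (ne_of_gt hy)]
      ring
    rw [key x h0, key M hM]
    rcases eq_or_lt_of_le hxM with heq | hlt
    · rw [heq]
    have hmono : StrictMonoOn h (Set.Ioi 0) := by
      apply strictMonoOn_of_deriv_pos (convex_Ioi 0)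
      · apply ContinuousOn.mul (continuous_pow 2).continuousOn
        apply ContinuousOn.sub
        · exact Real.continuousOn_log.comp (continuous_id.add continuous_const).continuousOn
            (fun y hy => by simp; linarith [Set.mem_Ioi.mp hy])
        · exact Real.continuousOn_log.mono (fun y hy => by simp; exact ne_of_gt (Set.mem_Ioi.mp hy))
      · intro y hy
        rw [interior_Ioi] at hy
        have hy0 : (0:ℝ) < y := hy
        have hd : HasDerivAt h (2*y*(Real.log (y+1) - Real.log y) + y^2*((y+1)⁻¹ - y⁻¹)) y := by
          have h1 : HasDerivAt (fun z : ℝ => z^2) (2*y) y := by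
            simpa using hasDerivAt_pow 2 y
          have h2 : HasDerivAt (fun z : ℝ => Real.log (z+1)) ((y+1)⁻¹) y := by
            have := ((hasDerivAt_id y).add_const 1).log (by positivity)
            simpa using this
          have h3 : HasDerivAt Real.log y⁻¹ y := Real.hasDerivAt_log (ne_of_gt hy0)
          have := h1.mul (h2.sub h3)
          exact this
        rw [hd.deriv]
        have hlog : (y+1)⁻¹ ≤ Real.log (y+1) - Real.log y := by
          have := Real.log_le_sub_one_of_pos (show (0:ℝ) < y/(y+1) by positivity)
          rw [Real.log_div (ne_of_gt hy0) (by positivity)] at this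
          have : Real.log y - Real.log (y+1) ≤ -(y+1)⁻¹ := by
            rw [show y/(y+1) - 1 = -(y+1)⁻¹ by field_simp; ring] at this; exact this
          linarith
        have e1 : y^2*((y+1)⁻¹ - y⁻¹) = -(y/(y+1)) := by field_simp; ring
        rw [e1]
        have : 2*y*(y+1)⁻¹ ≤ 2*y*(Real.log (y+1) - Real.log y) := by
          apply mul_le_mul_of_nonneg_left hlog (by positivity)
        have e2 : 2*y*(y+1)⁻¹ - y/(y+1) = y/(y+1) := by field_simp; ring
        nlinarith [div_pos hy0 (show (0:ℝ) < y+1 by linarith)]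
    exact le_of_lt (hmono (Set.mem_Ioi.mpr h0) (Set.mem_Ioi.mpr hM) hlt)

lemma expm1_pos {lam : ℝ} (hlam : 0 < lam) : 0 < Real.exp lam - 1 := by
  nlinarith [Real.add_one_le_exp lam]

lemma greenG_nonneg {lam : ℝ} (hlam : 0 < lam) (t s : ℝ) : 0 ≤ greenG lam t s := by
  have hE := expm1_pos hlam
  unfold greenG; split <;> positivity

lemma greenG_le {lam : ℝ} (hlam : 0 < lam) {t s : ℝ} (ht : t ∈ Icc (0:ℝ) 1)
    (hs : s ∈ Icc (0:ℝ) 1) :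
    greenG lam t s ≤ Real.exp lam / (Real.exp lam - 1) := by
  have hE := expm1_pos hlam
  obtain ⟨hs0, hs1⟩ := hs; obtain ⟨ht0, ht1⟩ := ht
  unfold greenG
  split
  · exact div_le_div_of_nonneg_right (Real.exp_le_exp.mpr (by nlinarith)) hE.le
  · exact div_le_div_of_nonneg_right (Real.exp_le_exp.mpr (by nlinarith)) hE.le

lemma greenG_measurable {lam : ℝ} (t : ℝ) : Measurable (greenG lam t) := by
  apply Measurable.ite (measurableSet_lt measurable_id measurable_const)
  · exact (Real.continuous_exp.comp (by continuity)).measurable.div_const _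
  · exact (Real.continuous_exp.comp (by continuity)).measurable.div_const _

lemma greenG_intInt {lam : ℝ} (hlam : 0 < lam) {t : ℝ} (ht : t ∈ Icc (0:ℝ) 1) {w : ℝ → ℝ}
    (hw : ContinuousOn w (Icc (0:ℝ) 1)) {a b : ℝ} (ha : a ∈ Icc (0:ℝ) 1) (hb : b ∈ Icc (0:ℝ) 1) :
    IntervalIntegrable (fun s => greenG lam t s * w s) volume a b := by
  obtain ⟨C, hC⟩ := isCompact_Icc.exists_bound_of_continuousOn hw
  rw [intervalIntegrable_iff]
  have hsub : Set.uIoc a b ⊆ Icc (0:ℝ) 1 := by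
    refine (Set.uIoc_subset_uIcc).trans ?_
    exact Set.uIcc_subset_Icc ha hb
  apply MeasureTheory.IntegrableOn.mono_set (t := Icc (0:ℝ) 1) ?_ hsub
  constructor
  · exact ((greenG_measurable t).aestronglyMeasurable.mul
      (hw.aestronglyMeasurable measurableSet_Icc))
  · apply MeasureTheory.HasFiniteIntegral.restrict_of_bounded
      (C := Real.exp lam / (Real.exp lam - 1) * C) measure_Icc_lt_top
    filter_upwards [MeasureTheory.ae_restrict_mem measurableSet_Icc] with s hs
    rw [Real.norm_eq_abs, abs_mul, abs_of_nonneg (greenG_nonneg hlam t s)]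
    exact mul_le_mul (greenG_le hlam ht hs) (hC s hs) (abs_nonneg _)
      (by have := expm1_pos hlam; positivity)

lemma ae_ne (t : ℝ) : ∀ᵐ x : ℝ, x ≠ t := by
  have h : (volume : Measure ℝ) {t} = 0 := measure_singleton t
  rw [MeasureTheory.ae_iff]; simpa using h

lemma exp_integral (c d a b : ℝ) (hc : c ≠ 0) (d' : ℝ) (hd' : d' ≠ 0) :
    ∫ s in a..b, Real.exp (c * s + d) / d'
      = Real.exp (c * b + d) / (c * d') - Real.exp (c * a + d) / (c * d') := by
  apply intervalIntegral.integral_eq_sub_of_hasDerivAt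
  · intro x _
    have h1 : HasDerivAt (fun s : ℝ => c * s + d) c x := by
      simpa using ((hasDerivAt_id x).const_mul c).add_const d
    have h2 := (h1.exp).div_const (c * d')
    refine h2.congr_deriv ?_
    field_simp
  · exact (Continuous.div_const (Real.continuous_exp.comp (by continuity)) d').intervalIntegrable _ _

lemma greenG_integral {lam : ℝ} (hlam : 0 < lam) {t : ℝ} (ht : t ∈ Icc (0:ℝ) 1) :
    ∫ s in (0:ℝ)..1, greenG lam t s = 1 / lam := by
  have hE := expm1_pos hlam
  have hint : ∀ a ∈ Icc (0:ℝ) 1, ∀ b ∈ Icc (0:ℝ) 1,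
      IntervalIntegrable (greenG lam t) volume a b := by
    intro a ha b hb
    simpa using greenG_intInt hlam ht (continuousOn_const (c := (1:ℝ))) ha hb
  have h0t : (0:ℝ) ≤ t := ht.1
  have ht1 : t ≤ 1 := ht.2
  have i1 : ∫ s in (0:ℝ)..t, greenG lam t s
      = ∫ s in (0:ℝ)..t, Real.exp (lam * s + lam * (1 - t)) / (Real.exp lam - 1) := by
    apply intervalIntegral.integral_congr_ae
    filter_upwards [ae_ne t] with x hx hmem
    rw [Set.uIoc_of_le h0t] at hmem
    have hxt : x < t := lt_of_le_of_ne hmem.2 hx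
    unfold greenG
    rw [if_pos hxt]
    ring_nf
  have i2 : ∫ s in t..(1:ℝ), greenG lam t s
      = ∫ s in t..(1:ℝ), Real.exp (lam * s + lam * (-t)) / (Real.exp lam - 1) := by
    apply intervalIntegral.integral_congr_ae
    apply Filter.Eventually.of_forall
    intro x hmem
    rw [Set.uIoc_of_le ht1] at hmem
    have hxt : ¬ x < t := not_lt.mpr (le_of_lt hmem.1)
    unfold greenG
    rw [if_neg hxt]
    ring_nf
  have e1 := exp_integral lam (lam * (1 - t)) 0 t (ne_of_gt hlam) _ (ne_of_gt hE)
  have e2 := exp_integral lam (lam * (-t)) t 1 (ne_of_gt hlam) _ (ne_of_gt hE)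
  have hsplit := intervalIntegral.integral_add_adjacent_intervals
    (hint 0 (by norm_num) t ht) (hint t ht 1 (by norm_num))
  rw [i1, e1] at hsplit
  rw [i2, e2] at hsplit
  rw [← hsplit]
  have h1 : lam * t + lam * (1 - t) = lam := by ring
  have h2 : lam * 0 + lam * (1 - t) = lam * (1 - t) := by ring
  have h3 : lam * 1 + lam * (-t) = lam * (1 - t) := by ring
  have h4 : lam * t + lam * (-t) = 0 := by ring
  rw [h1, h2, h3, h4, Real.exp_zero]
  field_simp
  ring

/-- Under the contraction-type assumption
`0 ≤ F(t,y) + λy - (F(t,x) + λx) ≤ α(x - y)·(x - y)ln(1 + 1/(x - y))` for `y < x`,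
with `0 < α ≤ λ`, the operator `T` satisfies
`‖Tu - Tv‖ ≤ (α/λ)·f(‖u - v‖)·‖u - v‖ ≤ f(‖u - v‖)·‖u - v‖`
for all continuous `u, v` on `[0,1]` with `v ≤ u` pointwise and `u ≠ v`,
where `f(t) = t·ln(1 + 1/t)` and `‖·‖` is the supremum norm over `[0,1]`. -/
theorem periodicT_norm_contraction
    (F : ℝ → ℝ → ℝ)
    (hF : ContinuousOn (fun p : ℝ × ℝ => F p.1 p.2) (Set.Icc 0 1 ×ˢ Set.univ))
    (lam α : ℝ) (hlam : 0 < lam) (hα : 0 < α) (hαlam : α ≤ lam)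
    (hcontr : ∀ t ∈ Set.Icc (0:ℝ) 1, ∀ x y : ℝ, y < x →
      0 ≤ F t y + lam * y - (F t x + lam * x) ∧
      F t y + lam * y - (F t x + lam * x) ≤ α * (x - y) * fGer (x - y))
    (u v : ℝ → ℝ)
    (hu : ContinuousOn u (Set.Icc 0 1)) (hv : ContinuousOn v (Set.Icc 0 1))
    (hle : ∀ t ∈ Set.Icc (0:ℝ) 1, v t ≤ u t)
    (hne : ∃ t ∈ Set.Icc (0:ℝ) 1, u t ≠ v t) :
    (⨆ t : Set.Icc (0:ℝ) 1, |periodicT lam F u t - periodicT lam F v t|) ≤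
      (α / lam) * fGer (⨆ t : Set.Icc (0:ℝ) 1, |u t - v t|) *
        (⨆ t : Set.Icc (0:ℝ) 1, |u t - v t|) ∧
    (α / lam) * fGer (⨆ t : Set.Icc (0:ℝ) 1, |u t - v t|) *
        (⨆ t : Set.Icc (0:ℝ) 1, |u t - v t|) ≤
      fGer (⨆ t : Set.Icc (0:ℝ) 1, |u t - v t|) *
        (⨆ t : Set.Icc (0:ℝ) 1, |u t - v t|) := by
  haveI : Nonempty (Set.Icc (0:ℝ) 1) := ⟨⟨0, by norm_num⟩⟩
  set M := ⨆ t : Set.Icc (0:ℝ) 1, |u t - v t| with hMdef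
  -- boundedness of the sup
  have hbdd : BddAbove (Set.range fun t : Set.Icc (0:ℝ) 1 => |u t - v t|) := by
    obtain ⟨C, hC⟩ := isCompact_Icc.exists_bound_of_continuousOn (hu.sub hv).abs
    refine ⟨C, ?_⟩
    rintro _ ⟨x, rfl⟩
    have := hC x x.2
    rwa [Real.norm_eq_abs, abs_abs] at this
  have hdM : ∀ s ∈ Set.Icc (0:ℝ) 1, u s - v s ≤ M := fun s hs =>
    (le_abs_self _).trans (le_ciSup hbdd ⟨s, hs⟩)
  have hM0 : 0 ≤ M := (abs_nonneg _).trans (le_ciSup hbdd ⟨0, by norm_num⟩)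
  -- continuity of the nonlinearities
  have hP : ∀ w : ℝ → ℝ, ContinuousOn w (Set.Icc 0 1) →
      ContinuousOn (fun s => F s (w s) + lam * w s) (Set.Icc (0:ℝ) 1) := by
    intro w hw
    refine ContinuousOn.add ?_ (continuousOn_const.mul hw)
    exact hF.comp (continuousOn_id.prodMk hw) (fun s hs => ⟨hs, Set.mem_univ _⟩)
  have hPu := hP u hu
  have hPv := hP v hv
  have hWcont : ContinuousOn
      (fun s => (F s (v s) + lam * v s) - (F s (u s) + lam * u s)) (Set.Icc (0:ℝ) 1) :=
    hPv.sub hPu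
  have h01 : (0:ℝ) ∈ Set.Icc (0:ℝ) 1 := by norm_num
  have h11 : (1:ℝ) ∈ Set.Icc (0:ℝ) 1 := by norm_num
  -- the key pointwise bound
  have key : ∀ t ∈ Set.Icc (0:ℝ) 1,
      |periodicT lam F u t - periodicT lam F v t| ≤ α / lam * fGer M * M := by
    intro t ht
    set W : ℝ → ℝ := fun s => (F s (v s) + lam * v s) - (F s (u s) + lam * u s) with hWdef
    have hW0 : ∀ s ∈ Set.Icc (0:ℝ) 1, 0 ≤ W s := by
      intro s hs
      rcases eq_or_lt_of_le (hle s hs) with heq | hlt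
      · simp [hWdef, ← heq]
      · exact (hcontr s hs (u s) (v s) hlt).1
    have hCnn : 0 ≤ α * (M * fGer M) :=
      mul_nonneg hα.le (mul_nonneg hM0 (fGer_nonneg hM0))
    have hWle : ∀ s ∈ Set.Icc (0:ℝ) 1, W s ≤ α * (M * fGer M) := by
      intro s hs
      rcases eq_or_lt_of_le (hle s hs) with heq | hlt
      · simp only [hWdef, ← heq, sub_self]
        exact hCnn
      · refine ((hcontr s hs (u s) (v s) hlt).2).trans ?_
        have hmono := sq_fGer_mono (sub_nonneg.mpr (hle s hs)) (hdM s hs)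
        calc α * (u s - v s) * fGer (u s - v s)
            = α * ((u s - v s) * fGer (u s - v s)) := by ring
          _ ≤ α * (M * fGer M) := mul_le_mul_of_nonneg_left hmono hα.le
    have hIu := greenG_intInt hlam ht hPu h01 h11
    have hIv := greenG_intInt hlam ht hPv h01 h11
    have hIW := greenG_intInt hlam ht hWcont h01 h11
    have hICst := greenG_intInt hlam ht
      (continuousOn_const (c := α * (M * fGer M))) h01 h11
    have hdiff : periodicT lam F v t - periodicT lam F u t
        = ∫ s in (0:ℝ)..1, greenG lam t s * W s := by
      unfold periodicT
      rw [← intervalIntegral.integral_sub hIv hIu]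
      apply intervalIntegral.integral_congr
      intro x _
      simp only [hWdef]
      ring
    have hnonneg : 0 ≤ ∫ s in (0:ℝ)..1, greenG lam t s * W s :=
      intervalIntegral.integral_nonneg (by norm_num)
        (fun s hs => mul_nonneg (greenG_nonneg hlam t s) (hW0 s hs))
    have hupper : (∫ s in (0:ℝ)..1, greenG lam t s * W s) ≤ α / lam * fGer M * M := by
      have h1 : (∫ s in (0:ℝ)..1, greenG lam t s * W s)
          ≤ ∫ s in (0:ℝ)..1, greenG lam t s * (α * (M * fGer M)) := by
        apply intervalIntegral.integral_mono_on (by norm_num) hIW hICst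
        intro s hs
        exact mul_le_mul_of_nonneg_left (hWle s hs) (greenG_nonneg hlam t s)
      have h2 : (∫ s in (0:ℝ)..1, greenG lam t s * (α * (M * fGer M)))
          = (1 / lam) * (α * (M * fGer M)) := by
        rw [intervalIntegral.integral_mul_const, greenG_integral hlam ht]
      refine h1.trans ?_
      rw [h2]
      have : (1 / lam) * (α * (M * fGer M)) = α / lam * fGer M * M := by
        field_simp
      rw [this]
    rw [abs_sub_comm, abs_of_nonneg (by rw [hdiff]; exact hnonneg), hdiff]
    exact hupper
  constructor
  · exact ciSup_le (fun t => key t t.2)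
  · have hα1 : α / lam ≤ 1 := (div_le_one hlam).mpr hαlam
    have hX : 0 ≤ fGer M * M := mul_nonneg (fGer_nonneg hM0) hM0
    calc α / lam * fGer M * M = (α / lam) * (fGer M * M) := by ring
      _ ≤ 1 * (fGer M * M) := mul_le_mul_of_nonneg_right hα1 hX
      _ = fGer M * M := one_mul _
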